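/- For any Laplace transform φ, any characteristic function g, and any a > 0, the function t ↦ φ(a(1 - g(t))) is a φ-infinitely divisible characteristic function. -/

import Mathlib

open MeasureTheory Filter Topology

/-- `φ` is the Laplace transform of (the distribution of) a nonnegative random variable. -/
def IsLTR (φ : ℝ → ℝ) : Prop :=
  ∃ μ : Measure ℝ, IsProbabilityMeasure μ ∧ μ {x | x < 0} = 0 ∧
    ∀ s : ℝ, 0 ≤ s → φ s = ∫ x, Real.exp (-s * x) ∂μ

/-- `P` is the probability generating function of a nonnegative-integer-valued random variable. -/
def IsPGF (P : ℝ → ℝ) : Prop :=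
  ∃ p : ℕ → ℝ, (∀ n, 0 ≤ p n) ∧ (∑' n, p n) = 1 ∧
    ∀ s : ℝ, 0 ≤ s → s ≤ 1 → P s = ∑' n, p n * s ^ n

/-- `f` is the characteristic function of a probability distribution on `ℝ`. -/
def IsCF (f : ℝ → ℂ) : Prop :=
  ∃ μ : Measure ℝ, IsProbabilityMeasure μ ∧
    ∀ t : ℝ, f t = ∫ x, Complex.exp (Complex.I * (t * x)) ∂μ

/-- `φ` (as a function on the right complex half-plane) is the Laplace transform of a
nonnegative random variable. -/
def IsLT (φ : ℂ → ℂ) : Prop :=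
  ∃ μ : Measure ℝ, IsProbabilityMeasure μ ∧ μ {x | x < 0} = 0 ∧
    ∀ z : ℂ, 0 ≤ z.re → φ z = ∫ x, Complex.exp (-z * x) ∂μ

/-- `ω` is an infinitely divisible characteristic function. -/
def IsID (ω : ℝ → ℂ) : Prop :=
  IsCF ω ∧ ∀ n : ℕ, 0 < n → ∃ g : ℝ → ℂ, IsCF g ∧ ∀ t, ω t = g t ^ n

/-- `f` is φ-infinitely divisible: it is a pointwise limit of `φ (aₙ (1 - fₙ(t)))` for
positive constants `aₙ` and characteristic functions `fₙ`. -/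
def PhiID (φ : ℂ → ℂ) (f : ℝ → ℂ) : Prop :=
  ∃ a : ℕ → ℝ, (∀ n, 0 < a n) ∧ ∃ fn : ℕ → ℝ → ℂ, (∀ n, IsCF (fn n)) ∧
    ∀ t, Tendsto (fun n => φ ((a n : ℂ) * (1 - fn n t))) atTop (𝓝 (f t))

/-- `ω` is a stable characteristic function. -/
def IsStable (ω : ℝ → ℂ) : Prop :=
  IsCF ω ∧ ∀ n : ℕ, 0 < n → ∃ a : ℝ, 0 < a ∧ ∃ b : ℝ,
    ∀ t, ω t ^ n = ω (a * t) * Complex.exp (Complex.I * (b * t))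

noncomputable def convPow (ν : Measure ℝ) : ℕ → Measure ℝ
  | 0 => Measure.dirac 0
  | n+1 => (convPow ν n).conv ν

lemma convPow_prob (ν : Measure ℝ) [IsProbabilityMeasure ν] (n : ℕ) :
    IsProbabilityMeasure (convPow ν n) := by
  induction n with
  | zero => exact Measure.dirac.isProbabilityMeasure
  | succ n ih =>
    haveI := ih
    unfold convPow Measure.conv
    exact Measure.isProbabilityMeasure_map measurable_add.aemeasurable

lemma cf_convPow (ν : Measure ℝ) [IsProbabilityMeasure ν] (n : ℕ) (t : ℝ) :
    ∫ x, Complex.exp (Complex.I * (t * x)) ∂(convPow ν n)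
      = (∫ x, Complex.exp (Complex.I * (t * x)) ∂ν) ^ n := by
  induction n with
  | zero => simp [convPow]
  | succ n ih =>
    haveI := convPow_prob ν n
    have hcont : Continuous (fun x : ℝ => Complex.exp (Complex.I * (t * x))) := by
      continuity
    rw [show convPow ν (n+1) = (convPow ν n).conv ν from rfl]
    unfold Measure.conv
    rw [integral_map measurable_add.aemeasurable hcont.aestronglyMeasurable]
    have : ∀ p : ℝ × ℝ, Complex.exp (Complex.I * (↑t * ↑(p.1 + p.2)))
        = Complex.exp (Complex.I * (t * p.1)) * Complex.exp (Complex.I * (t * p.2)) := by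
      intro p
      rw [← Complex.exp_add]
      congr 1
      push_cast
      ring
    try simp only [Function.comp_def]
    simp_rw [this]
    rw [integral_prod_mul (fun x : ℝ => Complex.exp (Complex.I * (t * x)))
      (fun x : ℝ => Complex.exp (Complex.I * (t * x)))]
    rw [ih]
    ring

lemma exp_series_sum (a x : ℝ) :
    ∑' n : ℕ, Real.exp (-(a*x)) * ((a*x)^n / n.factorial) = 1 := by
  rw [tsum_mul_left]
  have : ∑' n : ℕ, (a*x)^n / (n.factorial : ℝ) = Real.exp (a*x) := by
    rw [Real.exp_eq_exp_ℝ, NormedSpace.exp_eq_tsum_div]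
  rw [this, ← Real.exp_add]
  simp

lemma exp_series_complex (a x : ℝ) (w : ℂ) :
    Complex.exp (-((a:ℂ) * (1 - w)) * x)
      = ∑' n : ℕ, ((Real.exp (-(a*x)) * ((a*x)^n / n.factorial) : ℝ) : ℂ) * w ^ n := by
  have h1 : -((a:ℂ) * (1 - w)) * x = (-(a*x) : ℝ) + ((a*x : ℝ) : ℂ) * w := by
    push_cast; ring
  rw [h1, Complex.exp_add]
  have h2 : Complex.exp (((a*x : ℝ) : ℂ) * w) = ∑' n : ℕ, (((a*x : ℝ) : ℂ) * w)^n / n.factorial := by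
    rw [Complex.exp_eq_exp_ℂ, NormedSpace.exp_eq_tsum_div]
  rw [h2, ← Complex.ofReal_exp, ← tsum_mul_left]
  congr 1
  ext n
  push_cast
  rw [mul_pow]
  ring

theorem stmt_7 (φ : ℂ → ℂ) (hφ : IsLT φ) (g : ℝ → ℂ) (hg : IsCF g) (a : ℝ) (ha : 0 < a) :
    IsCF (fun t => φ ((a : ℂ) * (1 - g t))) ∧
    PhiID φ (fun t => φ ((a : ℂ) * (1 - g t))) := by
  obtain ⟨μ, hμp, hμ0, hφeq⟩ := hφ
  obtain ⟨ν, hνp, hgeq⟩ := hg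
  -- a.e. nonnegativity
  have hae : ∀ᵐ x ∂μ, 0 ≤ x := by
    rw [ae_iff]
    convert hμ0 using 2
    ext x
    simp [not_le]
  -- bound on g
  have hgle : ∀ t, ‖g t‖ ≤ 1 := by
    intro t
    rw [hgeq t]
    calc ‖∫ x, Complex.exp (Complex.I * (t * x)) ∂ν‖
        ≤ ∫ x, ‖Complex.exp (Complex.I * (t * x))‖ ∂ν := norm_integral_le_integral_norm _
      _ = 1 := by
          simp [Complex.norm_exp]
  refine ⟨?_, fun _ => a, fun _ => ha, fun _ => g, fun _ => ⟨ν, hνp, hgeq⟩,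
    fun t => tendsto_const_nhds⟩
  -- the real weight functions
  set f : ℕ → ℝ → ℝ := fun n x => Real.exp (-(a*x)) * ((a*x)^n / n.factorial) with hf
  have hfcont : ∀ n, Continuous (f n) := by
    intro n; apply Continuous.mul (by continuity) (by continuity)
  have hfnonneg : ∀ n, ∀ x : ℝ, 0 ≤ x → 0 ≤ f n x := by
    intro n x hx
    apply mul_nonneg (Real.exp_nonneg _)
    positivity
  set c : ℕ → ℝ := fun n => ∫ x, f n x ∂μ with hc
  set L : ℕ → ENNReal := fun n => ∫⁻ x, ENNReal.ofReal (f n x) ∂μ with hLdef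
  have hLsum : ∑' n, L n = 1 := by
    rw [hLdef]
    simp only
    rw [← lintegral_tsum (fun n => ((hfcont n).measurable.ennreal_ofReal).aemeasurable)]
    have : ∀ᵐ x ∂μ, (∑' n, ENNReal.ofReal (f n x)) = 1 := by
      filter_upwards [hae] with x hx
      rw [← ENNReal.ofReal_tsum_of_nonneg (fun n => hfnonneg n x hx)]
      · rw [exp_series_sum a x, ENNReal.ofReal_one]
      · exact (Real.summable_pow_div_factorial (a*x)).mul_left _
    rw [lintegral_congr_ae this, lintegral_one, measure_univ]
  have hLne : ∀ n, L n ≠ ⊤ := by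
    intro n
    have := ENNReal.le_tsum (f := L) n
    rw [hLsum] at this
    exact (lt_of_le_of_lt this ENNReal.one_lt_top).ne
  have hcL : ∀ n, ENNReal.ofReal (c n) = L n := by
    intro n
    rw [hc]
    simp only
    rw [integral_eq_lintegral_of_nonneg_ae (by filter_upwards [hae] with x hx using hfnonneg n x hx)
      (hfcont n).aestronglyMeasurable]
    rw [ENNReal.ofReal_toReal (hLne n)]
  have hcnonneg : ∀ n, 0 ≤ c n :=
    fun n => integral_nonneg_of_ae (by filter_upwards [hae] with x hx using hfnonneg n x hx)
  -- instances
  haveI : ∀ n, IsProbabilityMeasure (convPow ν n) := convPow_prob ν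
  -- the mixture measure
  refine ⟨Measure.sum (fun n => ENNReal.ofReal (c n) • convPow ν n), ?_, ?_⟩
  · constructor
    rw [Measure.sum_apply _ MeasurableSet.univ]
    simp only [Measure.smul_apply, measure_univ, smul_eq_mul, mul_one]
    simp_rw [hcL]
    exact hLsum
  intro t
  set w := g t with hw
  -- LHS
  have hre : 0 ≤ ((a:ℂ) * (1 - w)).re := by
    have h1 : ((a:ℂ) * (1 - w)).re = a * (1 - w.re) := by
      simp [Complex.mul_re]
    rw [h1]
    apply mul_nonneg ha.le
    have : w.re ≤ 1 := le_trans (Complex.re_le_norm w) (hgle t)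
    linarith
  show φ ((a:ℂ) * (1 - w)) = _
  rw [hφeq _ hre]
  -- the complex summands
  set F : ℕ → ℝ → ℂ := fun n x => ((f n x : ℝ) : ℂ) * w ^ n with hF
  have hFmeas : ∀ n, AEStronglyMeasurable (F n) μ := by
    intro n
    exact ((Complex.continuous_ofReal.comp (hfcont n)).mul continuous_const).aestronglyMeasurable
  have hFbound : ∑' n, ∫⁻ x, ‖F n x‖₊ ∂μ ≠ ⊤ := by
    have hle : ∀ n, ∫⁻ x, ‖F n x‖₊ ∂μ ≤ L n := by
      intro n
      apply lintegral_mono_ae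
      filter_upwards [hae] with x hx
      rw [← enorm_eq_nnnorm, ← ofReal_norm]
      apply ENNReal.ofReal_le_ofReal
      rw [hF]
      simp only [norm_mul, Complex.norm_real, norm_pow, Real.norm_eq_abs,
        abs_of_nonneg (hfnonneg n x hx)]
      exact mul_le_of_le_one_right (hfnonneg n x hx)
        (pow_le_one₀ (norm_nonneg _) (hgle t))
    have := ENNReal.tsum_le_tsum hle
    rw [hLsum] at this
    exact (lt_of_le_of_lt this ENNReal.one_lt_top).ne
  have hseries : ∀ x : ℝ, Complex.exp (-((a:ℂ) * (1 - w)) * x) = ∑' n, F n x := by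
    intro x
    exact exp_series_complex a x w
  calc ∫ x, Complex.exp (-((a:ℂ) * (1 - w)) * x) ∂μ
      = ∫ x, ∑' n, F n x ∂μ := by simp_rw [hseries]
    _ = ∑' n, ∫ x, F n x ∂μ := integral_tsum hFmeas hFbound
    _ = ∑' n, ((c n : ℝ) : ℂ) * w ^ n := by
        congr 1
        ext n
        rw [hF]
        simp only
        rw [integral_mul_const]
        congr 1
        exact integral_ofReal (𝕜 := ℂ)
    _ = ∫ x, Complex.exp (Complex.I * (t * x))
          ∂(Measure.sum (fun n => ENNReal.ofReal (c n) • convPow ν n)) := by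
        have hint : Integrable (fun x : ℝ => Complex.exp (Complex.I * (t * x)))
            (Measure.sum (fun n => ENNReal.ofReal (c n) • convPow ν n)) := by
          haveI : IsProbabilityMeasure
              (Measure.sum (fun n => ENNReal.ofReal (c n) • convPow ν n)) := by
            constructor
            rw [Measure.sum_apply _ MeasurableSet.univ]
            simp only [Measure.smul_apply, measure_univ, smul_eq_mul, mul_one]
            simp_rw [hcL]
            exact hLsum
          apply Integrable.mono' (integrable_const (1:ℝ))
            ((by continuity : Continuous (fun x : ℝ => Complex.exp (Complex.I * (t * x)))).aestronglyMeasurable)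
          filter_upwards with x
          simp [Complex.norm_exp]
        rw [integral_sum_measure hint]
        congr 1
        ext n
        rw [integral_smul_measure, cf_convPow, ← hgeq t, ← hw,
          ENNReal.toReal_ofReal (hcnonneg n)]
        rw [Complex.real_smul]
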